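/- Under the ε-TS algorithm, for any arm a ≠ 1 and any δ with 0 < δ < 1 − μ_a, setting C(t) = 8 ln t / δ², it holds for every t ≥ 1 that P(∃ s ≤ t : θ_a(s) > μ_a + δ and N_a(s) > C(t)) ≤ 2/t². -/

import Mathlib

open MeasureTheory ProbabilityTheory Filter Real
open scoped ENNReal

noncomputable section

/-- KL divergence between Bernoulli distributions of means `p` and `q` (real-valued version). -/
def klBern (p q : ℝ) : ℝ :=
  p * Real.log (p / q) + (1 - p) * Real.log ((1 - p) / (1 - q))

/-- KL divergence between Bernoulli distributions of means `p` and `q`, with the conventions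
`d(p,q) = ∞` if `p < 1` and `q ≥ 1`, or if `p > 0` and `q = 0`. -/
def klBernE (p q : ℝ) : ℝ≥0∞ :=
  if (p < 1 ∧ 1 ≤ q) ∨ (0 < p ∧ q = 0) then ⊤ else ENNReal.ofReal (klBern p q)

/-- The Bernoulli law with mean `p`, as a measure on `ℝ`. -/
def bernoulliLaw (p : ℝ) : Measure ℝ :=
  ENNReal.ofReal p • Measure.dirac (1 : ℝ) + ENNReal.ofReal (1 - p) • Measure.dirac (0 : ℝ)

/-- The uniform law on `[0,1]`, as a measure on `ℝ`. -/
def uniform01 : Measure ℝ := volume.restrict (Set.Icc (0 : ℝ) 1)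

/-- The cumulative distribution function of the `Beta(a, b)` distribution (for positive integer
parameters), evaluated at `x`. -/
def betaCDF (a b : ℕ) (x : ℝ) : ℝ :=
  (∫ y in (0 : ℝ)..x, y ^ (a - 1) * (1 - y) ^ (b - 1)) /
    (∫ y in (0 : ℝ)..1, y ^ (a - 1) * (1 - y) ^ (b - 1))

/-- The generalized inverse cdf of the `Beta(a, b)` distribution: applied to a uniform random
variable on `[0,1]`, it produces a `Beta(a, b)`-distributed random variable. -/
def betaInvCDF (a b : ℕ) (u : ℝ) : ℝ :=
  sInf {x : ℝ | x ∈ Set.Icc (0 : ℝ) 1 ∧ u ≤ betaCDF a b x}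

variable {K : ℕ} {Ω : Type*}

/-- `pulls arm a t ω` is the number of rounds `τ ∈ {1, …, t-1}` in which arm `a` was played,
i.e. `N_a(t)`, the number of pulls of arm `a` before round `t`. -/
def pulls (arm : ℕ → Ω → Fin K) (a : Fin K) (t : ℕ) (ω : Ω) : ℕ :=
  ∑ τ ∈ Finset.Ico 1 t, if arm τ ω = a then 1 else 0

/-- `rewSum arm X a t ω` is `S_a(t)`, the sum of the rewards observed from arm `a` before
round `t`, where `X a k` is the reward obtained on the `k`-th pull of arm `a`. -/
def rewSum (arm : ℕ → Ω → Fin K) (X : Fin K → ℕ → Ω → ℝ) (a : Fin K) (t : ℕ) (ω : Ω) : ℝ :=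
  ∑ k ∈ Finset.Icc 1 (pulls arm a t ω), X a k ω

/-- `empMean arm X a t ω` is `μ̂_a(t) = S_a(t) / N_a(t)` (and `0` if `N_a(t) = 0`). -/
def empMean (arm : ℕ → Ω → Fin K) (X : Fin K → ℕ → Ω → ℝ) (a : Fin K) (t : ℕ) (ω : Ω) : ℝ :=
  if pulls arm a t ω = 0 then 0 else rewSum arm X a t ω / (pulls arm a t ω : ℝ)

/-- The first Beta-posterior parameter of `ε`-TS: `α_a(t) = ⌊S_a(t)/(1-ε)⌋ + 1`. -/
def alphaTS (ε : ℝ) (arm : ℕ → Ω → Fin K) (X : Fin K → ℕ → Ω → ℝ) (a : Fin K) (t : ℕ)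
    (ω : Ω) : ℕ :=
  ⌊rewSum arm X a t ω / (1 - ε)⌋₊ + 1

/-- The second Beta-posterior parameter of `ε`-TS: `β_a(t) = N_a(t) + 2 - α_a(t)`. -/
def betaTS (ε : ℝ) (arm : ℕ → Ω → Fin K) (X : Fin K → ℕ → Ω → ℝ) (a : Fin K) (t : ℕ)
    (ω : Ω) : ℕ :=
  pulls arm a t ω + 2 - alphaTS ε arm X a t ω

/-- The posterior sample `θ_a(t)` used by `ε`-TS: if `μ̂_a(t) > 1 - ε` then `θ_a(t) = μ̂_a(t)`;
otherwise `θ_a(t) = (1-ε)·Y` where `Y ~ Beta(α_a(t), β_a(t))` is obtained by applying the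
inverse Beta cdf to the fresh independent uniform random variable `U a t`. -/
def thetaTS (ε : ℝ) (arm : ℕ → Ω → Fin K) (X : Fin K → ℕ → Ω → ℝ)
    (U : Fin K → ℕ → Ω → ℝ) (a : Fin K) (t : ℕ) (ω : Ω) : ℝ :=
  if 1 - ε < empMean arm X a t ω then empMean arm X a t ω
  else (1 - ε) * betaInvCDF (alphaTS ε arm X a t ω) (betaTS ε arm X a t ω) (U a t ω)

/-- An execution of the `ε`-TS algorithm on a `K`-armed Bernoulli bandit with mean vector `μ`:
`X a k` is the (i.i.d. `Bernoulli(μ a)`) reward of the `k`-th pull of arm `a`, `U a t` are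
i.i.d. uniform random variables on `[0,1]` (independent of the rewards) providing the
posterior samples via the inverse-cdf construction, and at every round `t ≥ 1` the played arm
`arm t` maximizes the posterior samples `θ_·(t)`. -/
structure EpsTS (K : ℕ) (μ : Fin K → ℝ) (ε : ℝ) (Ω : Type*) [MeasurableSpace Ω] where
  P : Measure Ω
  isProb : IsProbabilityMeasure P
  X : Fin K → ℕ → Ω → ℝ
  U : Fin K → ℕ → Ω → ℝ
  arm : ℕ → Ω → Fin K
  hXmeas : ∀ a n, Measurable (X a n)
  hUmeas : ∀ a t, Measurable (U a t)
  hArmMeas : ∀ t, Measurable (arm t)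
  hXlaw : ∀ a n, P.map (X a n) = bernoulliLaw (μ a)
  hUlaw : ∀ a t, P.map (U a t) = uniform01
  hIndep : iIndepFun
    (Sum.elim (fun p : Fin K × ℕ => X p.1 p.2) (fun p : Fin K × ℕ => U p.1 p.2)) P
  hArgmax : ∀ t, 1 ≤ t → ∀ ω b, thetaTS ε arm X U b t ω ≤ thetaTS ε arm X U (arm t ω) t ω

/-- `f` is an `ε`-gap function: `f : [0,1] → [0,∞)` with `f(Δ) = 0` for `Δ ∈ [0,ε]` and
`f(Δ) > 0` for `Δ > ε`. -/
def IsEpsGap (ε : ℝ) (f : ℝ → ℝ) : Prop :=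
  (∀ Δ, 0 ≤ Δ → Δ ≤ 1 → 0 ≤ f Δ) ∧ (∀ Δ, 0 ≤ Δ → Δ ≤ ε → f Δ = 0) ∧
    ∀ Δ, ε < Δ → Δ ≤ 1 → 0 < f Δ

/-- The lenient regret `R_f(T) = E[Σ_{t=1}^T f(Δ_{a_t})]` of an `ε`-TS execution, where
`Δ_a = μ* − μ_a` and `μ* = max_a μ_a`. -/
def lenientRegret {K : ℕ} {μ : Fin K → ℝ} {ε : ℝ} {Ω : Type*} [MeasurableSpace Ω]
    (E : EpsTS K μ ε Ω) (f : ℝ → ℝ) (T : ℕ) : ℝ :=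
  ∫ ω, (∑ t ∈ Finset.Icc 1 T, f ((⨆ b, μ b) - μ (E.arm t ω))) ∂E.P


/-- Hoeffding's lemma for a two-point distribution. -/
lemma hoeff_lemma {p : ℝ} (hp0 : 0 ≤ p) (hp1 : p ≤ 1) (u : ℝ) :
    p * Real.exp u + (1 - p) ≤ Real.exp (p * u + u ^ 2 / 8) := by
  set g : ℝ → ℝ := fun v => p * Real.exp v + (1 - p) with hg
  have hgpos : ∀ v, 0 < g v := by
    intro v
    rcases eq_or_lt_of_le hp1 with h1 | h1
    · simp [hg, ← h1]; positivity
    · have : 0 ≤ p * Real.exp v := by positivity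
      simp only [hg]; nlinarith
  set h : ℝ → ℝ := fun v => p * v + v ^ 2 / 8 - Real.log (g v) with hh
  set φ : ℝ → ℝ := fun v => p + v / 4 - p * Real.exp v / g v with hφ
  have hd1 : ∀ v, HasDerivAt h (φ v) v := by
    intro v
    have hgd : HasDerivAt g (p * Real.exp v) v := by
      exact ((Real.hasDerivAt_exp v).const_mul p).add_const (1 - p)
    have hld : HasDerivAt (fun w => Real.log (g w)) (p * Real.exp v / g v) v :=
      hgd.log (hgpos v).ne'
    have : HasDerivAt (fun w => p * w + w ^ 2 / 8) (p + v * 2 / 8) v := by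
      have h1 : HasDerivAt (fun w : ℝ => p * w) p v := by simpa using (hasDerivAt_id v).const_mul p
      have h2 : HasDerivAt (fun w : ℝ => w ^ 2 / 8) (2 * v ^ 1 / 8) v := by
        simpa using (hasDerivAt_pow 2 v).div_const 8
      simpa [mul_comm] using h1.fun_add h2
    have h3 := this.fun_sub hld
    refine h3.congr_deriv ?_
    ring
  have hd2 : ∀ v, HasDerivAt φ (1 / 4 - p * Real.exp v * (1 - p) / (g v) ^ 2) v := by
    intro v
    have hgd : HasDerivAt g (p * Real.exp v) v := by
      exact ((Real.hasDerivAt_exp v).const_mul p).add_const (1 - p)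
    have hnum : HasDerivAt (fun w => p * Real.exp w) (p * Real.exp v) v :=
      (Real.hasDerivAt_exp v).const_mul p
    have hdiv : HasDerivAt (fun w => p * Real.exp w / g w)
        ((p * Real.exp v * g v - p * Real.exp v * (p * Real.exp v)) / (g v) ^ 2) v :=
      hnum.div hgd (hgpos v).ne'
    have h1 : HasDerivAt (fun w => p + w / 4) (1 / 4) v := by
      simpa using ((hasDerivAt_id v).div_const 4).const_add p
    have := h1.fun_sub hdiv
    refine this.congr_deriv ?_
    simp only [hg]
    ring
  have hηnn : ∀ v, 0 ≤ 1 / 4 - p * Real.exp v * (1 - p) / (g v) ^ 2 := by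
    intro v
    have hg2 : 0 < (g v) ^ 2 := pow_pos (hgpos v) 2
    rw [sub_nonneg, div_le_iff₀ hg2]
    simp only [hg]
    nlinarith [sq_nonneg (p * Real.exp v - (1 - p))]
  have hφmono : Monotone φ :=
    monotone_of_deriv_nonneg (fun v => (hd2 v).differentiableAt)
      (fun v => by rw [(hd2 v).deriv]; exact hηnn v)
  have hφ0 : φ 0 = 0 := by
    have : g 0 = 1 := by simp [hg]
    simp [hφ, this]
  have hdiff : Differentiable ℝ h := fun v => (hd1 v).differentiableAt
  have hh0 : h 0 = 0 := by
    have : g 0 = 1 := by simp [hg]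
    simp [hh, this]
  have hnn : 0 ≤ h u := by
    rcases le_total 0 u with hu | hu
    · have hmono : MonotoneOn h (Set.Ici 0) := by
        refine monotoneOn_of_deriv_nonneg (convex_Ici 0) hdiff.continuous.continuousOn
          hdiff.differentiableOn ?_
        intro x hx
        rw [(hd1 x).deriv]
        rw [interior_Ici] at hx
        calc (0 : ℝ) = φ 0 := hφ0.symm
        _ ≤ φ x := hφmono (le_of_lt hx)
      rw [← hh0]
      exact hmono Set.self_mem_Ici hu hu
    · have hanti : AntitoneOn h (Set.Iic 0) := by
        refine antitoneOn_of_deriv_nonpos (convex_Iic 0) hdiff.continuous.continuousOn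
          hdiff.differentiableOn ?_
        intro x hx
        rw [(hd1 x).deriv]
        rw [interior_Iic] at hx
        calc φ x ≤ φ 0 := hφmono (le_of_lt hx)
        _ = 0 := hφ0
      rw [← hh0]
      exact hanti hu Set.self_mem_Iic hu
  have hlog : Real.log (g u) ≤ p * u + u ^ 2 / 8 := by
    have := hnn
    simp only [hh] at this
    linarith
  calc p * Real.exp u + (1 - p) = g u := rfl
  _ = Real.exp (Real.log (g u)) := (Real.exp_log (hgpos u)).symm
  _ ≤ Real.exp (p * u + u ^ 2 / 8) := Real.exp_le_exp.mpr hlog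

/-- Upper tail of the Binomial(m, x) distribution: `P(Bin(m,x) ≤ k)`. -/
def binTail (m k : ℕ) (x : ℝ) : ℝ :=
  ∑ j ∈ Finset.range (k + 1), (m.choose j : ℝ) * x ^ j * (1 - x) ^ (m - j)

lemma hasDerivAt_binTail (m k : ℕ) (hk : k < m) (x : ℝ) :
    HasDerivAt (binTail m k)
      (-((m.choose k : ℝ) * (m - k : ℕ) * x ^ k * (1 - x) ^ (m - k - 1))) x := by
  have hterm : ∀ j : ℕ, HasDerivAt (fun y : ℝ => (m.choose j : ℝ) * y ^ j * (1 - y) ^ (m - j))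
      ((m.choose j : ℝ) * (j : ℝ) * x ^ (j - 1) * (1 - x) ^ (m - j)
        - (m.choose j : ℝ) * (m - j : ℕ) * x ^ j * (1 - x) ^ (m - j - 1)) x := by
    intro j
    have h1 : HasDerivAt (fun y : ℝ => y ^ j) ((j : ℝ) * x ^ (j - 1)) x := hasDerivAt_pow j x
    have h2 : HasDerivAt (fun y : ℝ => (1 - y) ^ (m - j))
        (-(((m - j : ℕ) : ℝ) * (1 - x) ^ (m - j - 1))) x := by
      have hin : HasDerivAt (fun y : ℝ => 1 - y) (-1) x := by
        simpa using (hasDerivAt_id x).const_sub 1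
      have := (hasDerivAt_pow (m - j) (1 - x)).comp x hin
      simpa [mul_comm, mul_assoc, Function.comp_def] using this
    have := ((h1.const_mul (m.choose j : ℝ)).fun_mul h2)
    refine this.congr_deriv ?_
    ring
  have hsum := HasDerivAt.fun_sum (fun j (_ : j ∈ Finset.range (k + 1)) => hterm j)
  refine hsum.congr_deriv ?_
  -- telescoping
  set b : ℕ → ℝ := fun j => (m.choose j : ℝ) * (m - j : ℕ) * x ^ j * (1 - x) ^ (m - j - 1) with hb
  have key : ∀ j ∈ Finset.range (k + 1),
      (m.choose j : ℝ) * (j : ℝ) * x ^ (j - 1) * (1 - x) ^ (m - j)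
        - (m.choose j : ℝ) * (m - j : ℕ) * x ^ j * (1 - x) ^ (m - j - 1)
      = (if j = 0 then 0 else b (j - 1)) - b j := by
    intro j hj
    rcases Nat.eq_zero_or_pos j with rfl | hjpos
    · simp [hb]
    · obtain ⟨i, rfl⟩ := Nat.exists_eq_succ_of_ne_zero hjpos.ne'
      simp only [Nat.succ_ne_zero, if_false, hb, Nat.succ_sub_one]
      have hch : (m.choose (i + 1) : ℝ) * ((i + 1 : ℕ) : ℝ)
          = (m.choose i : ℝ) * ((m - i : ℕ) : ℝ) := by
        exact_mod_cast congrArg (fun n : ℕ => (n : ℝ)) (Nat.choose_succ_right_eq m i)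
      simp only [Nat.succ_eq_add_one, Nat.add_sub_cancel, Nat.sub_succ, Nat.sub_zero, hb]
      linear_combination (x ^ i * (1 - x) ^ ((m - i).pred)) * hch
  rw [Finset.sum_congr rfl key, Finset.sum_range_succ']
  have e3 : ∀ i : ℕ, (if i + 1 = 0 then (0:ℝ) else b (i + 1 - 1)) - b (i + 1) = b i - b (i + 1) := by
    intro i; simp
  rw [Finset.sum_congr rfl (fun i _ => e3 i), Finset.sum_range_sub' b k]
  simp only [hb]
  abel

lemma binTail_zero (m k : ℕ) (hk : k < m) : binTail m k 0 = 1 := by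
  unfold binTail
  rw [Finset.sum_eq_single 0]
  · simp
  · intro j hj hj0
    obtain ⟨i, rfl⟩ := Nat.exists_eq_succ_of_ne_zero hj0
    simp [pow_succ]
  · simp

lemma binTail_one (m k : ℕ) (hk : k < m) : binTail m k 1 = 0 := by
  unfold binTail
  refine Finset.sum_eq_zero fun j hj => ?_
  have : m - j ≠ 0 := by
    have := Finset.mem_range.mp hj; omega
  simp [zero_pow this]

lemma binTail_nonneg (m k : ℕ) {x : ℝ} (hx0 : 0 ≤ x) (hx1 : x ≤ 1) : 0 ≤ binTail m k x := by
  refine Finset.sum_nonneg fun j _ => ?_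
  have : (0:ℝ) ≤ 1 - x := by linarith
  positivity

/-- Chernoff–Hoeffding bound on the lower binomial tail. -/
lemma binTail_le_exp (m k : ℕ) (hm : 0 < m) {x : ℝ} (hx0 : 0 ≤ x) (hx1 : x ≤ 1)
    (hkx : (k : ℝ) ≤ x * m) :
    binTail m k x ≤ Real.exp (-2 * (x * m - k) ^ 2 / m) := by
  set lam : ℝ := 4 * (x * m - k) / m with hlam
  have hmpos : (0:ℝ) < m := by exact_mod_cast hm
  have hlam0 : 0 ≤ lam := by
    apply div_nonneg _ hmpos.le
    nlinarith
  have h1x : (0:ℝ) ≤ 1 - x := by linarith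
  have step1 : binTail m k x ≤ ∑ j ∈ Finset.range (m + 1),
      Real.exp (lam * ((k : ℝ) - j)) * ((m.choose j : ℝ) * x ^ j * (1 - x) ^ (m - j)) := by
    have hsub : Finset.range (k + 1) ⊆ Finset.range (m + 1) := by
      intro j hj
      simp only [Finset.mem_range] at *
      have : (j:ℝ) < (k:ℝ) + 1 := by exact_mod_cast hj
      have hkm : (k:ℝ) ≤ (m:ℝ) := le_trans hkx (by nlinarith)
      have : (j:ℝ) < (m:ℝ) + 1 := by linarith
      exact_mod_cast this
    refine le_trans (Finset.sum_le_sum fun j hj => ?_)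
      (Finset.sum_le_sum_of_subset_of_nonneg hsub fun j _ _ => by positivity)
    have hjk : j ≤ k := Nat.lt_succ_iff.mp (Finset.mem_range.mp hj)
    have : (1:ℝ) ≤ Real.exp (lam * ((k:ℝ) - j)) := by
      rw [Real.one_le_exp_iff]
      have : (0:ℝ) ≤ (k:ℝ) - j := by
        have : (j:ℝ) ≤ k := by exact_mod_cast hjk
        linarith
      positivity
    nlinarith [this, mul_nonneg (mul_nonneg (Nat.cast_nonneg (m.choose j)) (pow_nonneg hx0 j))
      (pow_nonneg h1x (m - j))]
  have step2 : ∑ j ∈ Finset.range (m + 1),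
      Real.exp (lam * ((k : ℝ) - j)) * ((m.choose j : ℝ) * x ^ j * (1 - x) ^ (m - j))
      = Real.exp (lam * k) * (x * Real.exp (-lam) + (1 - x)) ^ m := by
    rw [add_pow, Finset.mul_sum]
    refine Finset.sum_congr rfl fun j hj => ?_
    rw [mul_pow, ← Real.exp_nat_mul]
    have : Real.exp (lam * ((k:ℝ) - j)) = Real.exp (lam * k) * Real.exp ((j:ℝ) * -lam) := by
      rw [← Real.exp_add]; ring_nf
    rw [this]; ring
  have hbase : 0 ≤ x * Real.exp (-lam) + (1 - x) := by positivity
  have step3 : x * Real.exp (-lam) + (1 - x) ≤ Real.exp (x * (-lam) + (-lam) ^ 2 / 8) :=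
    hoeff_lemma hx0 hx1 (-lam)
  have step4 : (x * Real.exp (-lam) + (1 - x)) ^ m
      ≤ Real.exp ((m : ℝ) * (x * (-lam) + (-lam) ^ 2 / 8)) := by
    rw [Real.exp_nat_mul]
    exact pow_le_pow_left₀ hbase step3 m
  calc binTail m k x ≤ Real.exp (lam * k) * (x * Real.exp (-lam) + (1 - x)) ^ m := by
        rw [← step2]; exact step1
  _ ≤ Real.exp (lam * k) * Real.exp ((m : ℝ) * (x * (-lam) + (-lam) ^ 2 / 8)) := by
        have := Real.exp_pos (lam * k)
        nlinarith [step4, Real.exp_pos (lam * k)]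
  _ = Real.exp (lam * k + (m : ℝ) * (x * (-lam) + (-lam) ^ 2 / 8)) := (Real.exp_add _ _).symm
  _ = Real.exp (-2 * (x * m - k) ^ 2 / m) := by
        congr 1
        rw [hlam]
        field_simp
        ring

lemma betaCDF_eq_one_sub_binTail {a b : ℕ} (ha : 1 ≤ a) (hb : 1 ≤ b) {x : ℝ}
    (hx0 : 0 ≤ x) (hx1 : x ≤ 1) :
    betaCDF a b x = 1 - binTail (a + b - 1) (a - 1) x := by
  set m := a + b - 1 with hm
  set k := a - 1 with hk
  have hkm : k < m := by omega
  have hcpos : (0:ℝ) < (m.choose k : ℝ) * ((m - k : ℕ) : ℝ) := by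
    have h1 : 0 < m.choose k := Nat.choose_pos (by omega)
    have h2 : 0 < m - k := by omega
    have := mul_pos h1 h2
    exact_mod_cast this
  set c : ℝ := (m.choose k : ℝ) * ((m - k : ℕ) : ℝ) with hc
  -- antiderivative of the Beta integrand
  have hch0 : ((m.choose k : ℕ):ℝ) ≠ 0 := by
    have h1 : 0 < m.choose k := Nat.choose_pos (by omega)
    exact_mod_cast h1.ne'
  have hb0 : ((b : ℕ):ℝ) ≠ 0 := by
    exact_mod_cast (by omega : b ≠ 0)
  have hAD : ∀ y : ℝ, HasDerivAt (fun z => -(binTail m k z) / c)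
      (y ^ (a - 1) * (1 - y) ^ (b - 1)) y := by
    intro y
    have hder := (hasDerivAt_binTail m k hkm y).fun_neg.div_const c
    refine hder.congr_deriv ?_
    have e1 : m - k = b := by omega
    have e2 : k = a - 1 := hk
    rw [hc, e1, e2]
    field_simp
    rw [mul_comm _ (y ^ (a - 1)), mul_right_comm, mul_div_cancel_right₀ _ (show ((m.choose (a - 1) : ℕ) : ℝ) ≠ 0 from hch0)]
  have hcont : ∀ u v : ℝ, IntervalIntegrable (fun y : ℝ => y ^ (a - 1) * (1 - y) ^ (b - 1))
      MeasureTheory.volume u v := by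
    intro u v
    exact (Continuous.mul (continuous_pow _)
      (((continuous_const.sub continuous_id).pow _))).intervalIntegrable u v
  have hint : ∀ u : ℝ, ∫ y in (0:ℝ)..u, y ^ (a - 1) * (1 - y) ^ (b - 1)
      = (-(binTail m k u) / c) - (-(binTail m k 0) / c) := by
    intro u
    exact intervalIntegral.integral_eq_sub_of_hasDerivAt (fun y _ => hAD y) (hcont 0 u)
  have h0 : binTail m k 0 = 1 := binTail_zero m k hkm
  have h1' : binTail m k 1 = 0 := binTail_one m k hkm
  unfold betaCDF
  rw [hint x, hint 1, h0, h1']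
  field_simp
  ring

lemma betaInvCDF_le_one (a b : ℕ) (u : ℝ) : betaInvCDF a b u ≤ 1 := by
  unfold betaInvCDF
  rcases Set.eq_empty_or_nonempty {x : ℝ | x ∈ Set.Icc (0:ℝ) 1 ∧ u ≤ betaCDF a b x} with h | h
  · rw [h]; simp [Real.sInf_empty]
  · obtain ⟨z, hz⟩ := h
    have hbdd : BddBelow {x : ℝ | x ∈ Set.Icc (0:ℝ) 1 ∧ u ≤ betaCDF a b x} :=
      ⟨0, fun y hy => hy.1.1⟩
    exact le_trans (csInf_le hbdd hz) hz.1.2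

lemma betaCDF_lt_of_lt_betaInvCDF {a b : ℕ} {u x : ℝ} (hx : x ∈ Set.Icc (0:ℝ) 1)
    (h : x < betaInvCDF a b u) : betaCDF a b x < u := by
  by_contra hcon
  push_neg at hcon
  have hmem : x ∈ {y : ℝ | y ∈ Set.Icc (0:ℝ) 1 ∧ u ≤ betaCDF a b y} := ⟨hx, hcon⟩
  have hbdd : BddBelow {y : ℝ | y ∈ Set.Icc (0:ℝ) 1 ∧ u ≤ betaCDF a b y} :=
    ⟨0, fun y hy => hy.1.1⟩
  have : betaInvCDF a b u ≤ x := csInf_le hbdd hmem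
  linarith

lemma iIndepFun_precomp {ι κ : Type*} {Ω' : Type*} [MeasurableSpace Ω'] {P : Measure Ω'}
    {f : ι → Ω' → ℝ} (h : ProbabilityTheory.iIndepFun f P)
    (g : κ → ι) (hg : Function.Injective g) :
    ProbabilityTheory.iIndepFun
      (fun k => f (g k)) P := by
  classical
  rw [ProbabilityTheory.iIndepFun_iff_measure_inter_preimage_eq_mul] at h ⊢
  intro S sets hsets
  set sets' : ι → Set ℝ := Function.extend g sets (fun _ => Set.univ) with hsets'
  have hext : ∀ k, sets' (g k) = sets k := fun k => hg.extend_apply sets _ k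
  have hmeas' : ∀ i ∈ S.map ⟨g, hg⟩, MeasurableSet (sets' i) := by
    intro i hi
    obtain ⟨k, hk, rfl⟩ := Finset.mem_map.mp hi
    simp only [Function.Embedding.coeFn_mk]
    rw [hext]
    exact hsets k hk
  have := h (S.map ⟨g, hg⟩) hmeas'
  have hInter : (⋂ i ∈ S.map ⟨g, hg⟩, f i ⁻¹' sets' i) = ⋂ k ∈ S, f (g k) ⁻¹' sets k := by
    ext ω
    simp only [Set.mem_iInter, Finset.mem_map, Function.Embedding.coeFn_mk]
    constructor
    · intro hω k hk
      have := hω (g k) ⟨k, hk, rfl⟩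
      rwa [hext] at this
    · rintro hω i ⟨k, hk, rfl⟩
      rw [hext]
      exact hω k hk
  have hProd : ∏ i ∈ S.map ⟨g, hg⟩, P (f i ⁻¹' sets' i) = ∏ k ∈ S, P (f (g k) ⁻¹' sets k) := by
    rw [Finset.prod_map]
    exact Finset.prod_congr rfl fun k _ => by rw [Function.Embedding.coeFn_mk, hext]
  rw [hInter, hProd] at this
  exact this

lemma integrable_dirac'' {f : ℝ → ℝ} (hf : Measurable f) (x : ℝ) :
    MeasureTheory.Integrable f (Measure.dirac x) := by
  refine ⟨hf.aestronglyMeasurable, ?_⟩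
  simp only [MeasureTheory.HasFiniteIntegral]
  rw [MeasureTheory.lintegral_dirac' x hf.enorm]
  exact enorm_lt_top

lemma integrable_bernoulliLaw {p : ℝ} (hp1 : p ≤ 1) {f : ℝ → ℝ} (hf : Measurable f) :
    MeasureTheory.Integrable f (bernoulliLaw p) := by
  unfold bernoulliLaw
  have h1 : MeasureTheory.Integrable f (Measure.dirac (1:ℝ)) :=
    integrable_dirac'' hf _
  have h0 : MeasureTheory.Integrable f (Measure.dirac (0:ℝ)) :=
    integrable_dirac'' hf _
  exact ((h1.smul_measure ENNReal.ofReal_ne_top).add_measure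
    (h0.smul_measure ENNReal.ofReal_ne_top))

lemma integral_bernoulliLaw {p : ℝ} (hp0 : 0 ≤ p) (hp1 : p ≤ 1) {f : ℝ → ℝ}
    (hf : Measurable f) :
    ∫ x, f x ∂(bernoulliLaw p) = p * f 1 + (1 - p) * f 0 := by
  unfold bernoulliLaw
  have h1 : MeasureTheory.Integrable f (Measure.dirac (1:ℝ)) :=
    integrable_dirac'' hf _
  have h0 : MeasureTheory.Integrable f (Measure.dirac (0:ℝ)) :=
    integrable_dirac'' hf _
  rw [MeasureTheory.integral_add_measure (h1.smul_measure ENNReal.ofReal_ne_top)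
    (h0.smul_measure ENNReal.ofReal_ne_top),
    MeasureTheory.integral_smul_measure, MeasureTheory.integral_smul_measure,
    MeasureTheory.integral_dirac, MeasureTheory.integral_dirac,
    ENNReal.toReal_ofReal hp0, ENNReal.toReal_ofReal (by linarith : (0:ℝ) ≤ 1 - p)]
  simp [smul_eq_mul]

lemma bernoulli_chernoff {Ω' : Type*} [MeasurableSpace Ω'] {P : MeasureTheory.Measure Ω'}
    [MeasureTheory.IsProbabilityMeasure P] {p : ℝ} (hp0 : 0 ≤ p) (hp1 : p ≤ 1)
    {Y : ℕ → Ω' → ℝ} (hmeas : ∀ k, Measurable (Y k))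
    (hlaw : ∀ k, P.map (Y k) = bernoulliLaw p)
    (hindep : ProbabilityTheory.iIndepFun Y P)
    (n : ℕ) {d : ℝ} (hd : 0 < d) :
    P {ω | (n:ℝ) * (p + d / 2) ≤ ∑ k ∈ Finset.Icc 1 n, Y k ω}
      ≤ ENNReal.ofReal (Real.exp (-(n:ℝ) * d ^ 2 / 2)) := by
  set lam : ℝ := 2 * d with hlam
  have hlam0 : 0 ≤ lam := by positivity
  have hg : Measurable fun x : ℝ => Real.exp (lam * x) :=
    (measurable_id.const_mul lam).exp
  have h_int : ∀ k, MeasureTheory.Integrable (fun ω => Real.exp (lam * Y k ω)) P := by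
    intro k
    have := integrable_bernoulliLaw hp1 (p := p) hg
    rw [← hlaw k] at this
    exact (MeasureTheory.integrable_map_measure hg.aestronglyMeasurable
      (hmeas k).aemeasurable).mp this
  have hmgf : ∀ k, ProbabilityTheory.mgf (Y k) P lam = p * Real.exp lam + (1 - p) := by
    intro k
    unfold ProbabilityTheory.mgf
    have : ∫ ω, Real.exp (lam * Y k ω) ∂P = ∫ x, Real.exp (lam * x) ∂(P.map (Y k)) :=
      (MeasureTheory.integral_map (hmeas k).aemeasurable hg.aestronglyMeasurable).symm
    rw [this, hlaw k, integral_bernoulliLaw hp0 hp1 hg]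
    simp
  have h_int_sum : MeasureTheory.Integrable
      (fun ω => Real.exp (lam * (∑ k ∈ Finset.Icc 1 n, Y k) ω)) P :=
    hindep.integrable_exp_mul_sum hmeas (fun i _ => h_int i)
  have hcher := ProbabilityTheory.measure_ge_le_exp_mul_mgf (X := ∑ k ∈ Finset.Icc 1 n, Y k)
    (μ := P) ((n:ℝ) * (p + d / 2)) hlam0 h_int_sum
  rw [hindep.mgf_sum hmeas] at hcher
  have hmgfprod : ∏ k ∈ Finset.Icc 1 n, ProbabilityTheory.mgf (Y k) P lam
      ≤ Real.exp ((n:ℝ) * (lam * p + lam ^ 2 / 8)) := by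
    have hbd : ∀ k ∈ Finset.Icc 1 n, ProbabilityTheory.mgf (Y k) P lam
        ≤ Real.exp (lam * p + lam ^ 2 / 8) := by
      intro k _
      rw [hmgf k]
      have := hoeff_lemma hp0 hp1 lam
      calc p * Real.exp lam + (1 - p) ≤ Real.exp (p * lam + lam ^ 2 / 8) := this
      _ = Real.exp (lam * p + lam ^ 2 / 8) := by rw [mul_comm p lam]
    calc ∏ k ∈ Finset.Icc 1 n, ProbabilityTheory.mgf (Y k) P lam
        ≤ ∏ _k ∈ Finset.Icc 1 n, Real.exp (lam * p + lam ^ 2 / 8) :=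
          Finset.prod_le_prod (fun k _ => ProbabilityTheory.mgf_nonneg) hbd
    _ = Real.exp ((n:ℝ) * (lam * p + lam ^ 2 / 8)) := by
          rw [Finset.prod_const, Nat.card_Icc]
          rw [← Real.exp_nat_mul]
          simp
  have hfinal : Real.exp (-lam * ((n:ℝ) * (p + d / 2)))
      * Real.exp ((n:ℝ) * (lam * p + lam ^ 2 / 8)) = Real.exp (-(n:ℝ) * d ^ 2 / 2) := by
    rw [← Real.exp_add]
    congr 1
    rw [hlam]
    ring
  have hle : (P {ω | (n:ℝ) * (p + d / 2) ≤ (∑ k ∈ Finset.Icc 1 n, Y k) ω}).toReal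
      ≤ Real.exp (-(n:ℝ) * d ^ 2 / 2) := by
    calc (P {ω | (n:ℝ) * (p + d / 2) ≤ (∑ k ∈ Finset.Icc 1 n, Y k) ω}).toReal
        ≤ Real.exp (-lam * ((n:ℝ) * (p + d / 2)))
          * ∏ k ∈ Finset.Icc 1 n, ProbabilityTheory.mgf (Y k) P lam := hcher
    _ ≤ Real.exp (-lam * ((n:ℝ) * (p + d / 2)))
          * Real.exp ((n:ℝ) * (lam * p + lam ^ 2 / 8)) := by
          exact mul_le_mul_of_nonneg_left hmgfprod (Real.exp_pos _).le
    _ = Real.exp (-(n:ℝ) * d ^ 2 / 2) := hfinal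
  have hset : {ω | (n:ℝ) * (p + d / 2) ≤ ∑ k ∈ Finset.Icc 1 n, Y k ω}
      = {ω | (n:ℝ) * (p + d / 2) ≤ (∑ k ∈ Finset.Icc 1 n, Y k) ω} := by
    ext ω; simp [Finset.sum_apply]
  rw [hset]
  rw [← ENNReal.ofReal_toReal (MeasureTheory.measure_ne_top P _)]
  exact ENNReal.ofReal_le_ofReal hle

lemma pulls_le_sub_one {K : ℕ} {Ω : Type*} (arm : ℕ → Ω → Fin K) (a : Fin K) (s : ℕ) (ω : Ω) :
    pulls arm a s ω ≤ s - 1 := by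
  unfold pulls
  calc ∑ τ ∈ Finset.Ico 1 s, (if arm τ ω = a then 1 else 0)
      ≤ ∑ _τ ∈ Finset.Ico 1 s, 1 := Finset.sum_le_sum fun τ _ => by split <;> omega
  _ = s - 1 := by simp [Finset.sum_const, Nat.card_Ico]

lemma exp_half_lt_two : Real.exp (1/2 : ℝ) < 2 := by
  nlinarith [Real.exp_one_lt_d9, Real.exp_pos (1/2 : ℝ),
    (by rw [← Real.exp_add]; norm_num : Real.exp (1/2 : ℝ) * Real.exp (1/2 : ℝ) = Real.exp 1)]

lemma exp_neg_four_log {t : ℕ} (ht : 1 ≤ t) (c : ℝ) :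
    Real.exp (c - 4 * Real.log t) = Real.exp c / (t : ℝ) ^ 4 := by
  have ht0 : (0:ℝ) < t := by exact_mod_cast ht
  rw [Real.exp_sub]
  congr 1
  rw [show (4 : ℝ) * Real.log t = ((4:ℕ):ℝ) * Real.log t by norm_num, Real.exp_nat_mul,
    Real.exp_log ht0]
set_option maxHeartbeats 1600000

/-- **Lemma (saturated arms rarely have high posterior samples).** Under `ε`-TS, for any
suboptimal arm `a ≠ 1` and any `δ` with `0 < δ < 1 − μ_a`, setting `C(t) = 8 ln t / δ²`, it
holds for every `t ≥ 1` that
`P(∃ s ≤ t : θ_a(s) > μ_a + δ ∧ N_a(s) > C(t)) ≤ 2/t²`. -/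
theorem epsTS_prob_exists_theta_high_saturated {K : ℕ} [NeZero K] (hK : 2 ≤ K)
    (ε : ℝ) (hε : ε ∈ Set.Ioo (0 : ℝ) 1)
    (μ : Fin K → ℝ) (hμ : ∀ a, μ a ∈ Set.Icc (0 : ℝ) 1)
    (hSorted : ∀ a b : Fin K, a ≤ b → μ b ≤ μ a)
    (hGap : ∀ a : Fin K, a ≠ 0 → ε < μ 0 - μ a)
    {Ω : Type*} [MeasurableSpace Ω] (E : EpsTS K μ ε Ω)
    (a : Fin K) (ha : a ≠ 0) (δ : ℝ) (hδ0 : 0 < δ) (hδ1 : δ < 1 - μ a)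
    (t : ℕ) (ht : 1 ≤ t) :
    E.P {ω | ∃ s : ℕ, 1 ≤ s ∧ s ≤ t ∧
        μ a + δ < thetaTS ε E.arm E.X E.U a s ω ∧
        8 * Real.log t / δ ^ 2 < (pulls E.arm a s ω : ℝ)}
      ≤ ENNReal.ofReal (2 / (t : ℝ) ^ 2) := by
  classical
  haveI := E.isProb
  have hμa0 : 0 ≤ μ a := (hμ a).1
  have hμa1 : μ a ≤ 1 := (hμ a).2
  have hδle1 : δ ≤ 1 := by linarith
  have hε0 : 0 < ε := hε.1
  have hε1 : ε < 1 := hε.2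
  have h1ε : 0 < 1 - ε := by linarith
  have ht0 : (0:ℝ) < t := by exact_mod_cast ht
  have hlogt : 0 ≤ Real.log t := Real.log_nonneg (by exact_mod_cast ht)
  rcases eq_or_lt_of_le ht with heq | ht2
  · -- t = 1 : the event is empty
    have hte : t = 1 := heq.symm
    subst hte
    have hempty : {ω : Ω | ∃ s : ℕ, 1 ≤ s ∧ s ≤ 1 ∧
        μ a + δ < thetaTS ε E.arm E.X E.U a s ω ∧
        8 * Real.log (1:ℕ) / δ ^ 2 < (pulls E.arm a s ω : ℝ)} = ∅ := by
      ext ω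
      simp only [Set.mem_setOf_eq, Set.mem_empty_iff_false, iff_false, not_exists]
      rintro s ⟨hs1, hs2, _, hN⟩
      have hs : s = 1 := le_antisymm hs2 hs1
      subst hs
      have hp : pulls E.arm a 1 ω = 0 := by unfold pulls; simp
      rw [hp] at hN
      simp only [Nat.cast_one, Real.log_one, Nat.cast_zero] at hN
      have : (0:ℝ) ≤ 8 * 0 / δ ^ 2 := by norm_num
      linarith
    rw [hempty]
    simp
  · -- 2 ≤ t
    have ht2' : (2:ℝ) ≤ t := by exact_mod_cast ht2
    set c : ℝ := 1 - Real.exp (1/2 : ℝ) / (t:ℝ)^4 with hc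
    set An : ℕ → Set Ω := fun n => {ω | 8 * Real.log t / δ ^ 2 < (n:ℝ) ∧
      (n:ℝ) * (μ a + δ/2) ≤ ∑ k ∈ Finset.Icc 1 n, E.X a k ω} with hAn
    set Bs : ℕ → Set Ω := fun s => {ω | c < E.U a s ω} with hBs
    have hsub : {ω : Ω | ∃ s : ℕ, 1 ≤ s ∧ s ≤ t ∧
        μ a + δ < thetaTS ε E.arm E.X E.U a s ω ∧
        8 * Real.log t / δ ^ 2 < (pulls E.arm a s ω : ℝ)}
        ⊆ (⋃ n ∈ Finset.Ico 1 t, An n) ∪ ⋃ s ∈ Finset.Icc 1 t, Bs s := by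
      rintro ω ⟨s, hs1, hst, hθ, hN⟩
      set n := pulls E.arm a s ω with hn
      have hCnn : (0:ℝ) ≤ 8 * Real.log t / δ ^ 2 := by positivity
      have hnpos : 1 ≤ n := by
        by_contra hcon
        push_neg at hcon
        have : n = 0 := by omega
        rw [this] at hN
        simp only [Nat.cast_zero] at hN
        linarith
      have hncast : (0:ℝ) < n := by exact_mod_cast hnpos
      have hnlt : n < t := by
        have := pulls_le_sub_one E.arm a s ω
        omega
      have hSdef : rewSum E.arm E.X a s ω = ∑ k ∈ Finset.Icc 1 n, E.X a k ω := rfl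
      have hemp : empMean E.arm E.X a s ω = rewSum E.arm E.X a s ω / n := by
        unfold empMean
        rw [if_neg (by omega)]
      by_cases hcase : μ a + δ/2 < empMean E.arm E.X a s ω
      · -- high empirical mean
        left
        refine Set.mem_iUnion.mpr ⟨n, Set.mem_iUnion.mpr ⟨Finset.mem_Ico.mpr ⟨hnpos, hnlt⟩, ?_⟩⟩
        refine ⟨hN, ?_⟩
        rw [hemp] at hcase
        rw [← hSdef]
        have := (lt_div_iff₀ hncast).mp hcase
        nlinarith
      · -- low empirical mean: posterior sample must be large
        push_neg at hcase
        have hbranch : ¬ (1 - ε < empMean E.arm E.X a s ω) := by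
          intro hgt
          have hθeq : thetaTS ε E.arm E.X E.U a s ω = empMean E.arm E.X a s ω := by
            unfold thetaTS
            rw [if_pos hgt]
          rw [hθeq] at hθ
          linarith
        have hθeq : thetaTS ε E.arm E.X E.U a s ω
            = (1-ε) * betaInvCDF (alphaTS ε E.arm E.X a s ω) (betaTS ε E.arm E.X a s ω)
              (E.U a s ω) := by
          unfold thetaTS
          rw [if_neg hbranch]
        rw [hθeq] at hθ
        set A := alphaTS ε E.arm E.X a s ω with hA
        set B := betaTS ε E.arm E.X a s ω with hB
        have hAeq : A = ⌊rewSum E.arm E.X a s ω / (1-ε)⌋₊ + 1 := rfl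
        have hBeq : B = n + 2 - A := rfl
        set x : ℝ := (μ a + δ) / (1 - ε) with hx
        have hx0 : 0 ≤ x := div_nonneg (by linarith) h1ε.le
        have hxY : x < betaInvCDF A B (E.U a s ω) := by
          rw [hx, div_lt_iff₀ h1ε]
          linarith [hθ]
        have hx1 : x ≤ 1 := le_trans hxY.le (betaInvCDF_le_one A B _)
        have hemple : empMean E.arm E.X a s ω ≤ 1 - ε := not_lt.mp hbranch
        have hSle : rewSum E.arm E.X a s ω ≤ (n:ℝ) * (1 - ε) := by
          rw [hemp, div_le_iff₀ hncast] at hemple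
          linarith
        have hfloorle : ⌊rewSum E.arm E.X a s ω / (1-ε)⌋₊ ≤ n := by
          have hle : rewSum E.arm E.X a s ω / (1-ε) ≤ (n:ℝ) := by
            rw [div_le_iff₀ h1ε]
            linarith
          exact le_trans (Nat.floor_le_of_le hle) (by simp)
        have hA1 : 1 ≤ A := by omega
        have hAle : A ≤ n + 1 := by omega
        have hB1 : 1 ≤ B := by omega
        have hm : A + B - 1 = n + 1 := by omega
        have hSle2 : rewSum E.arm E.X a s ω ≤ (n:ℝ) * (μ a + δ/2) := by
          rw [hemp, div_le_iff₀ hncast] at hcase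
          linarith
        have hk : ((A-1 : ℕ):ℝ) ≤ (n:ℝ) * (μ a + δ/2) / (1-ε) := by
          have hrhs : (0:ℝ) ≤ (n:ℝ) * (μ a + δ/2) / (1-ε) :=
            div_nonneg (mul_nonneg hncast.le (by linarith)) h1ε.le
          have hA1' : (A - 1 : ℕ) = ⌊rewSum E.arm E.X a s ω / (1-ε)⌋₊ := by omega
          rw [hA1']
          rcases le_or_gt 0 (rewSum E.arm E.X a s ω) with hS0 | hS0
          · have h2 : rewSum E.arm E.X a s ω / (1-ε) ≤ (n:ℝ) * (μ a + δ/2)/(1-ε) := by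
              gcongr
            exact le_trans (Nat.floor_le (div_nonneg hS0 h1ε.le)) h2
          · have hfz : ⌊rewSum E.arm E.X a s ω / (1-ε)⌋₊ = 0 :=
              Nat.floor_eq_zero.mpr (lt_of_le_of_lt
                (div_nonpos_of_nonpos_of_nonneg hS0.le h1ε.le) one_pos)
            rw [hfz]
            simpa using hrhs
        have hgap : (n:ℝ) * δ / 2 ≤ x * ((n+1:ℕ):ℝ) - ((A-1:ℕ):ℝ) := by
          have h1 : (n:ℝ) * (μ a + δ) / (1-ε) ≤ x * ((n+1:ℕ):ℝ) := by
            rw [hx]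
            push_cast
            rw [div_mul_eq_mul_div, div_le_div_iff₀ h1ε h1ε]
            nlinarith
          have e : (n:ℝ)*(μ a + δ)/(1-ε) - (n:ℝ)*(μ a + δ/2)/(1-ε) = ((n:ℝ)*δ/2)/(1-ε) := by
            field_simp
            ring
          have e2 : (n:ℝ)*δ/2 ≤ ((n:ℝ)*δ/2)/(1-ε) := by
            rw [le_div_iff₀ h1ε]
            have hpos : 0 ≤ (n:ℝ)*δ/2*ε := by positivity
            nlinarith
          linarith [hk, h1]
        have hkx : ((A-1:ℕ):ℝ) ≤ x * ((n+1:ℕ):ℝ) := by nlinarith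
        have hbt := binTail_le_exp (n+1) (A-1) (by omega) hx0 hx1 hkx
        have hexp : Real.exp (-2 * (x * ((n+1:ℕ):ℝ) - ((A-1:ℕ):ℝ))^2 / ((n+1:ℕ):ℝ))
            ≤ Real.exp (1/2:ℝ) / (t:ℝ)^4 := by
          rw [← exp_neg_four_log ht]
          apply Real.exp_le_exp.mpr
          have hnδ : 8 * Real.log t < (n:ℝ) * δ^2 := by
            rw [div_lt_iff₀ (by positivity)] at hN
            linarith
          set g : ℝ := x * ((n+1:ℕ):ℝ) - ((A-1:ℕ):ℝ) with hg
          have hnp : (0:ℝ) < ((n+1:ℕ):ℝ) := by positivity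
          rw [div_le_iff₀ hnp]
          push_cast
          have hgnn : 0 ≤ g := le_trans (by positivity) hgap
          have hsq : ((n:ℝ) * δ / 2)^2 ≤ g^2 := pow_le_pow_left₀ (by positivity) hgap 2
          have h8 : (8 * Real.log t - (n:ℝ)*δ^2) * ((n:ℝ)+1) ≤ 0 :=
            mul_nonpos_of_nonpos_of_nonneg (by linarith) (by positivity)
          have hd2 : δ^2 ≤ 1 := by nlinarith
          have hnd : (n:ℝ)*δ^2 ≤ (n:ℝ) := by nlinarith
          nlinarith [hsq, h8, hnd]
        refine Or.inr (Set.mem_iUnion.mpr ⟨s, Set.mem_iUnion.mpr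
          ⟨Finset.mem_Icc.mpr ⟨hs1, hst⟩, ?_⟩⟩)
        show c < E.U a s ω
        have hUcdf : betaCDF A B x < E.U a s ω :=
          betaCDF_lt_of_lt_betaInvCDF ⟨hx0, hx1⟩ hxY
        have hCDF : betaCDF A B x = 1 - binTail (n+1) (A-1) x := by
          rw [betaCDF_eq_one_sub_binTail hA1 hB1 hx0 hx1, hm]
        have hcle : c ≤ betaCDF A B x := by
          rw [hCDF, hc]
          have := le_trans hbt hexp
          linarith
        linarith
    refine le_trans (measure_mono hsub) (le_trans (measure_union_le _ _) ?_)
    have hPA : ∀ n ∈ Finset.Ico 1 t, E.P (An n) ≤ ENNReal.ofReal (1/(t:ℝ)^4) := by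
      intro n hn
      by_cases hcn : 8 * Real.log t / δ ^ 2 < (n:ℝ)
      · have hinj : Function.Injective (fun k : ℕ => (Sum.inl (a, k) : (Fin K × ℕ) ⊕ (Fin K × ℕ))) := by
          intro u v huv
          simpa using huv
        have hindep' : ProbabilityTheory.iIndepFun
            (fun k => E.X a k) E.P := iIndepFun_precomp E.hIndep _ hinj
        have hch := bernoulli_chernoff hμa0 hμa1 (fun k => E.hXmeas a k)
          (fun k => E.hXlaw a k) hindep' n hδ0
        have hsub2 : An n ⊆ {ω | (n:ℝ) * (μ a + δ/2) ≤ ∑ k ∈ Finset.Icc 1 n, E.X a k ω} :=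
          fun ω h => h.2
        refine le_trans (measure_mono hsub2) (le_trans hch (ENNReal.ofReal_le_ofReal ?_))
        have hnδ : 8 * Real.log t < (n:ℝ) * δ^2 := by
          rw [div_lt_iff₀ (by positivity)] at hcn
          linarith
        have hle : Real.exp (-(n:ℝ)*δ^2/2) ≤ Real.exp ((0:ℝ) - 4*Real.log t) := by
          apply Real.exp_le_exp.mpr
          linarith
        rw [exp_neg_four_log ht, Real.exp_zero] at hle
        exact hle
      · have hAe : An n = ∅ := by
          ext ω
          simp only [hAn, Set.mem_setOf_eq, Set.mem_empty_iff_false, iff_false]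
          intro h
          exact hcn h.1
        rw [hAe]
        simp
    have hPB : ∀ s ∈ Finset.Icc 1 t, E.P (Bs s) ≤ ENNReal.ofReal (Real.exp (1/2:ℝ)/(t:ℝ)^4) := by
      intro s hs
      have hBe : Bs s = E.U a s ⁻¹' Set.Ioi c := rfl
      rw [hBe, ← Measure.map_apply (E.hUmeas a s) measurableSet_Ioi, E.hUlaw a s]
      unfold uniform01
      rw [Measure.restrict_apply measurableSet_Ioi]
      have hss : Set.Ioi c ∩ Set.Icc 0 1 ⊆ Set.Ioc c 1 := fun y hy => ⟨hy.1, hy.2.2⟩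
      refine le_trans (measure_mono hss) ?_
      rw [Real.volume_Ioc]
      apply ENNReal.ofReal_le_ofReal
      rw [hc]
      ring_nf
      try exact le_rfl
    have h1 : E.P (⋃ n ∈ Finset.Ico 1 t, An n)
        ≤ (Finset.Ico 1 t).card • ENNReal.ofReal (1/(t:ℝ)^4) :=
      le_trans (measure_biUnion_finset_le _ _)
        (le_trans (Finset.sum_le_sum hPA) (le_of_eq (Finset.sum_const _)))
    have h2 : E.P (⋃ s ∈ Finset.Icc 1 t, Bs s)
        ≤ (Finset.Icc 1 t).card • ENNReal.ofReal (Real.exp (1/2:ℝ)/(t:ℝ)^4) :=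
      le_trans (measure_biUnion_finset_le _ _)
        (le_trans (Finset.sum_le_sum hPB) (le_of_eq (Finset.sum_const _)))
    rw [Nat.card_Ico] at h1
    have hcard : (Finset.Icc 1 t).card = t := by rw [Nat.card_Icc]; omega
    rw [hcard] at h2
    refine le_trans (add_le_add h1 h2) ?_
    have hsmul1 : (t-1 : ℕ) • ENNReal.ofReal (1/(t:ℝ)^4)
        = ENNReal.ofReal (((t-1:ℕ):ℝ) * (1/(t:ℝ)^4)) := by
      rw [nsmul_eq_mul, ← ENNReal.ofReal_natCast, ← ENNReal.ofReal_mul (Nat.cast_nonneg _)]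
    have hsmul2 : t • ENNReal.ofReal (Real.exp (1/2:ℝ)/(t:ℝ)^4)
        = ENNReal.ofReal ((t:ℝ) * (Real.exp (1/2:ℝ)/(t:ℝ)^4)) := by
      rw [nsmul_eq_mul, ← ENNReal.ofReal_natCast, ← ENNReal.ofReal_mul (Nat.cast_nonneg _)]
    rw [hsmul1, hsmul2, ← ENNReal.ofReal_add (by positivity) (by positivity)]
    apply ENNReal.ofReal_le_ofReal
    have he : Real.exp (1/2:ℝ) < 2 := exp_half_lt_two
    have h4 : (0:ℝ) < (t:ℝ)^4 := by positivity
    have h2' : (0:ℝ) < (t:ℝ)^2 := by positivity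
    rw [Nat.cast_sub ht]
    rw [show ((t:ℝ) - (1:ℕ)) * (1/(t:ℝ)^4) + (t:ℝ) * (Real.exp (1/2:ℝ)/(t:ℝ)^4)
      = (((t:ℝ) - 1) + (t:ℝ)*Real.exp (1/2:ℝ))/(t:ℝ)^4 by push_cast; ring]
    rw [div_le_div_iff₀ h4 h2']
    have hstep : (t:ℝ) - 1 + (t:ℝ)*Real.exp (1/2:ℝ) ≤ 2*(t:ℝ)^2 := by
      nlinarith [he, ht2', Real.exp_pos (1/2:ℝ)]
    nlinarith [mul_le_mul_of_nonneg_right hstep (le_of_lt h2')]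

end
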